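/- Let N ≥ 2, γ > 0, m_b > 0, δP ∈ ℝ. For each α ∈ {2, …, N} let λ_α > γ²/4, u_{αb} ∈ ℝ, set 𝒫_α = u_{αb}·δP/√(m_b) and f_α = √(4λ_α − γ²). Then ∫₀^∞ Σ_{α=2}^{N} [(2𝒫_α/f_α)·e^{−γt/2}·sin(f_α t/2)]² dt = (δP²/(2γ m_b))·Σ_{α=2}^{N} u_{αb}²/λ_α. -/

import Mathlib

open MeasureTheory Real Set Filter

lemma intg_aux (γ f : ℝ) (hγ : 0 < γ) :
    IntegrableOn (fun t : ℝ => Real.exp (-γ*t) * Real.sin (f*t/2)^2) (Set.Ioi 0) := by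
  refine Integrable.mono' (exp_neg_integrableOn_Ioi 0 hγ) ?_ ?_
  · exact (Continuous.mul (by continuity) (by continuity)).aestronglyMeasurable
  · filter_upwards with t
    rw [Real.norm_eq_abs, abs_mul, abs_of_nonneg (Real.exp_pos _).le]
    have h1 : |Real.sin (f*t/2)^2| ≤ 1 := by
      rw [abs_of_nonneg (sq_nonneg _)]
      exact Real.sin_sq_le_one _
    nlinarith [Real.exp_pos (-γ*t), abs_nonneg (Real.sin (f*t/2)^2)]

lemma int_aux (γ f : ℝ) (hγ : 0 < γ) :
    ∫ t in Set.Ioi (0:ℝ), Real.exp (-γ*t) * Real.sin (f*t/2)^2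
      = f^2 / (2*γ*(γ^2+f^2)) := by
  set D : ℝ := γ^2 + f^2 with hDdef
  have hD : 0 < D := by positivity
  set F : ℝ → ℝ := fun t => -(1/(2*γ)) * Real.exp (-γ*t)
      - (1/(2*D)) * (Real.exp (-γ*t) * (f * Real.sin (f*t) - γ * Real.cos (f*t))) with hF
  have he : ∀ t : ℝ, HasDerivAt (fun t : ℝ => Real.exp (-γ*t)) (-γ * Real.exp (-γ*t)) t := by
    intro t
    have h := ((hasDerivAt_id t).const_mul (-γ)).exp
    simpa [mul_comm] using h
  have hderiv : ∀ t : ℝ, HasDerivAt F (Real.exp (-γ*t) * Real.sin (f*t/2)^2) t := by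
    intro t
    have hs : HasDerivAt (fun t : ℝ => f * Real.sin (f*t) - γ * Real.cos (f*t))
        (f * (Real.cos (f*t) * f) - γ * (-Real.sin (f*t) * f)) t := by
      have h1 := (((hasDerivAt_id t).const_mul f).sin).const_mul f
      have h2 := (((hasDerivAt_id t).const_mul f).cos).const_mul γ
      simpa [mul_comm] using h1.fun_sub h2
    have hmul := ((he t).fun_mul hs).const_mul (1/(2*D))
    have hfinal := (((he t).const_mul (-(1/(2*γ))))).fun_sub hmul
    refine hfinal.congr_deriv ?_
    have hsin : Real.sin (f*t/2)^2 = 1/2 - Real.cos (2*(f*t/2))/2 := Real.sin_sq_eq_half_sub _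
    rw [hsin, show 2*(f*t/2) = f*t by ring]
    field_simp
    ring
  have h1 : Tendsto (fun t : ℝ => Real.exp (-γ*t)) atTop (nhds 0) := by
    have h := Real.tendsto_exp_neg_atTop_nhds_zero.comp
      (Filter.Tendsto.const_mul_atTop hγ tendsto_id)
    exact h.congr (fun t => by simp [Function.comp, neg_mul])
  have h2 : Tendsto (fun t : ℝ => Real.exp (-γ*t) * (f * Real.sin (f*t) - γ * Real.cos (f*t)))
      atTop (nhds 0) := by
    have hb : Tendsto (fun t : ℝ => (|f| + |γ|) * Real.exp (-γ*t)) atTop (nhds 0) := by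
      simpa using h1.const_mul (|f| + |γ|)
    refine squeeze_zero_norm ?_ hb
    · intro t
      rw [Real.norm_eq_abs, abs_mul, abs_of_nonneg (Real.exp_pos _).le]
      have : |f * Real.sin (f*t) - γ * Real.cos (f*t)| ≤ |f| + |γ| := by
        calc |f * Real.sin (f*t) - γ * Real.cos (f*t)|
            ≤ |f * Real.sin (f*t)| + |γ * Real.cos (f*t)| := abs_sub _ _
          _ ≤ |f| + |γ| := by
              rw [abs_mul, abs_mul]
              have := Real.abs_sin_le_one (f*t)
              have := Real.abs_cos_le_one (f*t)
              nlinarith [abs_nonneg f, abs_nonneg γ]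
      nlinarith [Real.exp_pos (-γ*t)]
  have hT : Tendsto F atTop (nhds 0) := by
    have h := (h1.const_mul (-(1/(2*γ)))).sub (h2.const_mul (1/(2*D)))
    have h0 : (-(1/(2*γ)))*(0:ℝ) - (1/(2*D))*0 = 0 := by ring
    rw [h0] at h
    exact h
  have hint := intg_aux γ f hγ
  have key := integral_Ioi_of_hasDerivAt_of_tendsto' (f := F)
      (fun x _ => hderiv x) hint hT
  rw [key, hF]
  simp only [mul_zero, Real.exp_zero, Real.sin_zero, Real.cos_zero, mul_one, mul_zero]
  field_simp
  ring

/-- Proposition 2 of the paper: for an abrupt power loss `δP` at a single bus `b`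
with inertia `m_b` and homogeneous damping ratio `γ`, the performance measure
`𝓜_b = ∫₀^∞ Σ_{α=2}^N [(2𝒫_α/f_α)·e^{−γt/2}·sin(f_α t/2)]² dt` equals
`(δP²/(2γ m_b))·Σ_{α=2}^N u_{αb}²/λ_α`, where `𝒫_α = u_{αb}·δP/√(m_b)` and
`f_α = √(4λ_α − γ²)` (underdamped case `4λ_α > γ²`). -/
theorem stmt_2 (N : ℕ) (hN : 2 ≤ N) (γ mb δP : ℝ) (hγ : 0 < γ) (hmb : 0 < mb)
    (lam u : ℕ → ℝ) (hlam : ∀ α ∈ Finset.Icc 2 N, γ ^ 2 / 4 < lam α)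
    (P f : ℕ → ℝ)
    (hP : ∀ α, P α = u α * δP / Real.sqrt mb)
    (hf : ∀ α, f α = Real.sqrt (4 * lam α - γ ^ 2)) :
    ∫ t in Set.Ioi (0 : ℝ),
        ∑ α ∈ Finset.Icc 2 N,
          ((2 * P α / f α) * Real.exp (-γ * t / 2) * Real.sin (f α * t / 2)) ^ 2
      = (δP ^ 2 / (2 * γ * mb)) * ∑ α ∈ Finset.Icc 2 N, (u α) ^ 2 / lam α := by
  have heq : ∀ α, ∀ t : ℝ,
      ((2 * P α / f α) * Real.exp (-γ * t / 2) * Real.sin (f α * t / 2)) ^ 2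
        = (2 * P α / f α) ^ 2 * (Real.exp (-γ * t) * Real.sin (f α * t / 2) ^ 2) := by
    intro α t
    have h2 : Real.exp (-γ*t/2) * Real.exp (-γ*t/2) = Real.exp (-γ*t) := by
      rw [← Real.exp_add]; ring_nf
    calc ((2 * P α / f α) * Real.exp (-γ * t / 2) * Real.sin (f α * t / 2)) ^ 2
        = (2 * P α / f α) ^ 2 * ((Real.exp (-γ*t/2) * Real.exp (-γ*t/2))
            * Real.sin (f α * t / 2) ^ 2) := by ring
      _ = _ := by rw [h2]
  have hswap : ∫ t in Set.Ioi (0 : ℝ),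
      ∑ α ∈ Finset.Icc 2 N,
        ((2 * P α / f α) * Real.exp (-γ * t / 2) * Real.sin (f α * t / 2)) ^ 2
      = ∑ α ∈ Finset.Icc 2 N, ∫ t in Set.Ioi (0 : ℝ),
        ((2 * P α / f α) * Real.exp (-γ * t / 2) * Real.sin (f α * t / 2)) ^ 2 := by
    apply MeasureTheory.integral_finset_sum
    intro α _
    have : MeasureTheory.IntegrableOn
        (fun t : ℝ => (2 * P α / f α) ^ 2 * (Real.exp (-γ * t) * Real.sin (f α * t / 2) ^ 2))
        (Set.Ioi 0) := (intg_aux γ (f α) hγ).const_mul _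
    exact this.congr_fun (fun t _ => (heq α t).symm) measurableSet_Ioi
  rw [hswap, Finset.mul_sum]
  apply Finset.sum_congr rfl
  intro α hα
  have hlm : γ ^ 2 / 4 < lam α := hlam α hα
  have hlmpos : 0 < lam α := lt_of_le_of_lt (by positivity) hlm
  have hpos : 0 < 4 * lam α - γ ^ 2 := by linarith
  have hfα : f α = Real.sqrt (4 * lam α - γ ^ 2) := hf α
  have hfpos : 0 < f α := by rw [hfα]; exact Real.sqrt_pos.mpr hpos
  have hfsq : f α ^ 2 = 4 * lam α - γ ^ 2 := by rw [hfα]; exact Real.sq_sqrt hpos.le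
  have hmbs : Real.sqrt mb ^ 2 = mb := Real.sq_sqrt hmb.le
  have hmbsne : Real.sqrt mb ≠ 0 := (Real.sqrt_pos.mpr hmb).ne'
  calc (∫ t in Set.Ioi (0 : ℝ),
          ((2 * P α / f α) * Real.exp (-γ * t / 2) * Real.sin (f α * t / 2)) ^ 2)
      = (2 * P α / f α) ^ 2 * ∫ t in Set.Ioi (0 : ℝ),
          Real.exp (-γ * t) * Real.sin (f α * t / 2) ^ 2 := by
        rw [← MeasureTheory.integral_const_mul]
        exact MeasureTheory.setIntegral_congr_fun measurableSet_Ioi (fun t _ => heq α t)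
    _ = (2 * P α / f α) ^ 2 * (f α ^ 2 / (2 * γ * (γ ^ 2 + f α ^ 2))) := by
        rw [int_aux γ (f α) hγ]
    _ = δP ^ 2 / (2 * γ * mb) * (u α ^ 2 / lam α) := by
        rw [hP α, hfsq]
        have h4 : γ ^ 2 + (4 * lam α - γ ^ 2) = 4 * lam α := by ring
        rw [h4]
        field_simp
        ring_nf
        rw [Real.sq_sqrt hmb.le, hfsq]
        ring
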